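/- Let n ≥ 2 and d ≥ 1 be integers, let p_1 < p_2 < ⋯ denote the primes, and let k be a positive integer with p_1·p_2⋯p_k ≥ n^d. Then for every y ∈ {0,…,n−1} and every finite set T ⊆ {0,…,n−1} with y ∉ T and |T| ≤ d, there exists an index j ∈ {1,…,k} such that y mod p_j ≠ z mod p_j for every z ∈ T. -/

import Mathlib

/-- The number-theoretic separation property underlying the EGH construction: if the
product of the first `k` primes is at least `n^d`, then any `y ∈ {0,…,n−1}` can be
separated from any set `T ⊆ {0,…,n−1}` of at most `d` elements not containing `y` by at
least one of the first `k` primes: there is `j < k` such that `y` and every `z ∈ T`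
have different residues modulo `p_j` (where `Nat.nth Nat.Prime j` is the `(j+1)`-th
prime). -/
theorem egh_separation (n d k : ℕ) (hn : 2 ≤ n) (hd : 1 ≤ d) (hk : 1 ≤ k)
    (hprod : n ^ d ≤ ∏ j ∈ Finset.range k, Nat.nth Nat.Prime j)
    (y : ℕ) (hy : y < n) (T : Finset ℕ) (hT : ∀ z ∈ T, z < n) (hyT : y ∉ T)
    (hcard : T.card ≤ d) :
    ∃ j < k, ∀ z ∈ T,
      y % Nat.nth Nat.Prime j ≠ z % Nat.nth Nat.Prime j := by
  by_cases hTe : T = ∅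
  · exact ⟨0, hk, by simp [hTe]⟩
  by_contra hcon
  push_neg at hcon
  set P : ℕ := ∏ z ∈ T, (max y z - min y z) with hP
  have hdvd : ∀ j ∈ Finset.range k, Nat.nth Nat.Prime j ∣ P := by
    intro j hj
    obtain ⟨z, hz, hmod⟩ := hcon j (Finset.mem_range.mp hj)
    have hp : Nat.nth Nat.Prime j ∣ (max y z - min y z) := by
      rcases le_total y z with h | h
      · rw [max_eq_right h, min_eq_left h]
        exact (Nat.modEq_iff_dvd' h).mp hmod
      · rw [max_eq_left h, min_eq_right h]
        exact (Nat.modEq_iff_dvd' h).mp hmod.symm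
    exact hp.trans (Finset.dvd_prod_of_mem _ hz)
  have hinj : Set.InjOn (Nat.nth Nat.Prime) (Finset.range k) :=
    fun a _ b _ h => Nat.nth_injective Nat.infinite_setOf_prime h
  have hpd : ∏ j ∈ Finset.range k, Nat.nth Nat.Prime j ∣ P := by
    rw [show (∏ j ∈ Finset.range k, Nat.nth Nat.Prime j) = ∏ p ∈ (Finset.range k).image (Nat.nth Nat.Prime), p from (Finset.prod_image (f := id) hinj).symm]
    apply Finset.prod_primes_dvd
    · intro p hp
      obtain ⟨j, _, rfl⟩ := Finset.mem_image.mp hp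
      exact (Nat.prime_nth_prime j).prime
    · intro p hp
      obtain ⟨j, hj, rfl⟩ := Finset.mem_image.mp hp
      exact hdvd j hj
  -- P is positive
  have hPpos : 0 < P := by
    apply Finset.prod_pos
    intro z hz
    have : y ≠ z := fun h => hyT (h ▸ hz)
    omega
  -- P < n ^ d
  have hPlt : P < n ^ d := by
    calc P ≤ (n - 1) ^ T.card := by
            apply Finset.prod_le_pow_card
            intro z hz
            have := hT z hz
            omega
      _ ≤ (n - 1) ^ d := Nat.pow_le_pow_right (by omega) hcard
      _ < n ^ d := Nat.pow_lt_pow_left (by omega) (by omega)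
  have := Nat.le_of_dvd hPpos hpd
  omega
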